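/- Let S be a set of positive integers. Define the prime vertex graph Δ(S) with vertex set the primes dividing some element of S, where primes p and q are adjacent iff pq divides some element of S; and the common divisor graph Γ(S) with vertex set S \ {1}, where a and b are adjacent iff gcd(a,b) > 1. Then Δ(S) and Γ(S) have the same number of connected components. -/
import Mathlib


/-- The prime vertex graph Δ(S): vertices are primes dividing some element of `S`;
two primes are adjacent iff their product divides some element of `S`. -/
def primeVertexGraph (S : Set ℕ) :
    SimpleGraph {p : ℕ // p.Prime ∧ ∃ a ∈ S, p ∣ a} :=
  SimpleGraph.fromRel (fun p q => ∃ a ∈ S, p.1 * q.1 ∣ a)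

/-- The common divisor graph Γ(S): vertices are elements of `S` other than `1`;
two vertices are adjacent iff their gcd exceeds `1`. -/
def commonDivisorGraph (S : Set ℕ) :
    SimpleGraph {a : ℕ // a ∈ S ∧ a ≠ 1} :=
  SimpleGraph.fromRel (fun a b => 1 < Nat.gcd a.1 b.1)

namespace Stmt0Aux

variable (S : Set ℕ)

abbrev Vd := {p : ℕ // p.Prime ∧ ∃ a ∈ S, p ∣ a}
abbrev Vg := {a : ℕ // a ∈ S ∧ a ≠ 1}

lemma delta_reach {p q : Vd S} {a : ℕ} (ha : a ∈ S) (hp : p.1 ∣ a) (hq : q.1 ∣ a) :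
    (primeVertexGraph S).Reachable p q := by
  by_cases h : p = q
  · exact h ▸ SimpleGraph.Reachable.refl p
  · apply SimpleGraph.Adj.reachable
    refine ⟨h, Or.inl ⟨a, ha, ?_⟩⟩
    exact Nat.Coprime.mul_dvd_of_dvd_of_dvd
      ((Nat.coprime_primes p.2.1 q.2.1).mpr (fun he => h (Subtype.ext he))) hp hq

lemma gamma_reach {a b : Vg S} {p : ℕ} (hp : p.Prime) (hpa : p ∣ a.1) (hpb : p ∣ b.1) :
    (commonDivisorGraph S).Reachable a b := by
  by_cases h : a = b
  · exact h ▸ SimpleGraph.Reachable.refl a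
  · apply SimpleGraph.Adj.reachable
    have hne : a.1 ≠ b.1 := fun he => h (Subtype.ext he)
    have hg0 : 0 < Nat.gcd a.1 b.1 := by
      rcases Nat.eq_zero_or_pos (Nat.gcd a.1 b.1) with h0 | h0
      · obtain ⟨h1, h2⟩ := Nat.gcd_eq_zero_iff.mp h0
        exact absurd (h1.trans h2.symm) hne
      · exact h0
    refine ⟨h, Or.inl ?_⟩
    exact lt_of_lt_of_le hp.one_lt (Nat.le_of_dvd hg0 (Nat.dvd_gcd hpa hpb))

noncomputable def witD (p : Vd S) : Vg S :=
  ⟨p.2.2.choose, p.2.2.choose_spec.1,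
    fun h1 => p.2.1.ne_one (Nat.dvd_one.mp (h1 ▸ p.2.2.choose_spec.2))⟩

lemma witD_dvd (p : Vd S) : p.1 ∣ (witD S p).1 := p.2.2.choose_spec.2

noncomputable def witG (a : Vg S) : Vd S :=
  ⟨a.1.minFac, Nat.minFac_prime a.2.2, ⟨a.1, a.2.1, Nat.minFac_dvd _⟩⟩

lemma witG_dvd (a : Vg S) : (witG S a).1 ∣ a.1 := Nat.minFac_dvd _

noncomputable def F : (primeVertexGraph S).ConnectedComponent →
    (commonDivisorGraph S).ConnectedComponent :=
  SimpleGraph.ConnectedComponent.lift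
    (fun p => (commonDivisorGraph S).connectedComponentMk (witD S p)) (by
    have step : ∀ p q : Vd S, (primeVertexGraph S).Adj p q →
        (commonDivisorGraph S).connectedComponentMk (witD S p)
          = (commonDivisorGraph S).connectedComponentMk (witD S q) := by
      intro p q hadj
      apply SimpleGraph.ConnectedComponent.sound
      obtain ⟨hne, hrel⟩ := hadj
      have hex : ∃ a ∈ S, p.1 * q.1 ∣ a := by
        rcases hrel with ⟨a, ha, hd⟩ | ⟨a, ha, hd⟩
        · exact ⟨a, ha, hd⟩
        · exact ⟨a, ha, (Nat.mul_comm q.1 p.1) ▸ hd⟩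
      obtain ⟨a, haS, hd⟩ := hex
      have hpa : p.1 ∣ a := dvd_trans (Dvd.intro _ rfl) hd
      have hqa : q.1 ∣ a := dvd_trans (Dvd.intro_left _ rfl) hd
      have ha1 : a ≠ 1 := fun h1 => p.2.1.ne_one (Nat.dvd_one.mp (h1 ▸ hpa))
      let av : Vg S := ⟨a, haS, ha1⟩
      exact (gamma_reach S (b := av) p.2.1 (witD_dvd S p) hpa).trans
        (gamma_reach S (a := av) q.2.1 hqa (witD_dvd S q))
    intro v w wlk hp
    clear hp
    induction wlk with
    | nil => rfl
    | cons h _ ih => exact (step _ _ h).trans ih)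

noncomputable def G : (commonDivisorGraph S).ConnectedComponent →
    (primeVertexGraph S).ConnectedComponent :=
  SimpleGraph.ConnectedComponent.lift
    (fun a => (primeVertexGraph S).connectedComponentMk (witG S a)) (by
    have step : ∀ a b : Vg S, (commonDivisorGraph S).Adj a b →
        (primeVertexGraph S).connectedComponentMk (witG S a)
          = (primeVertexGraph S).connectedComponentMk (witG S b) := by
      intro a b hadj
      apply SimpleGraph.ConnectedComponent.sound
      obtain ⟨hne, hrel⟩ := hadj
      have hg : 1 < Nat.gcd a.1 b.1 := by
        rcases hrel with h | h
        · exact h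
        · exact Nat.gcd_comm b.1 a.1 ▸ h
      set r := (Nat.gcd a.1 b.1).minFac with hr
      have hrp : r.Prime := Nat.minFac_prime (Nat.ne_of_gt hg)
      have hra : r ∣ a.1 := dvd_trans (Nat.minFac_dvd _) (Nat.gcd_dvd_left _ _)
      have hrb : r ∣ b.1 := dvd_trans (Nat.minFac_dvd _) (Nat.gcd_dvd_right _ _)
      let rv : Vd S := ⟨r, hrp, ⟨a.1, a.2.1, hra⟩⟩
      exact (delta_reach S (q := rv) a.2.1 (witG_dvd S a) hra).trans
        (delta_reach S (p := rv) b.2.1 hrb (witG_dvd S b))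
    intro v w wlk hp
    clear hp
    induction wlk with
    | nil => rfl
    | cons h _ ih => exact (step _ _ h).trans ih)

lemma left_inv : Function.LeftInverse (G S) (F S) := by
  apply SimpleGraph.ConnectedComponent.ind
  intro p
  apply SimpleGraph.ConnectedComponent.sound
  exact delta_reach S (witD S p).2.1 (witG_dvd S (witD S p)) (witD_dvd S p)

lemma right_inv : Function.RightInverse (G S) (F S) := by
  apply SimpleGraph.ConnectedComponent.ind
  intro a
  apply SimpleGraph.ConnectedComponent.sound
  exact gamma_reach S (witG S a).2.1 (witD_dvd S (witG S a)) (witG_dvd S a)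

end Stmt0Aux

/-- For a set `S` of positive integers, the prime vertex graph `Δ(S)` and the common
divisor graph `Γ(S)` have the same number of connected components. -/
theorem stmt0 (S : Set ℕ) (hS : ∀ a ∈ S, 0 < a) :
    Cardinal.mk (primeVertexGraph S).ConnectedComponent =
      Cardinal.mk (commonDivisorGraph S).ConnectedComponent := by
  exact Cardinal.mk_congr ⟨Stmt0Aux.F S, Stmt0Aux.G S, Stmt0Aux.left_inv S, Stmt0Aux.right_inv S⟩
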